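/- Let n ≥ 4 and let r = ⌈(mn+4)/(2m+2n)⌉ with m ≥ n, and set s = ⌈n/2⌉ − r. If s = r, then n ≡ 3 (mod 4) and m ∈ {n, n+1}. -/

import Mathlib

/-- For `m ≥ n ≥ 4`, with `r = ⌈(mn+4)/(2m+2n)⌉` and `s = ⌈n/2⌉ - r`,
if `s = r` then `n ≡ 3 (mod 4)` and `m ∈ {n, n+1}`. -/
theorem stmt5 (m n : ℕ) (hn : 4 ≤ n) (hmn : n ≤ m) (r s : ℤ)
    (hr : r = ⌈((m * n + 4 : ℚ)) / (2 * m + 2 * n)⌉)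
    (hs : s = ⌈(n : ℚ) / 2⌉ - r)
    (hsr : s = r) :
    n % 4 = 3 ∧ (m = n ∨ m = n + 1) := by
  have hn' : (4:ℚ) ≤ n := by exact_mod_cast hn
  have hmn' : (n:ℚ) ≤ m := by exact_mod_cast hmn
  have hb : (0:ℚ) < 2 * m + 2 * n := by linarith
  -- ceiling bounds for r
  have h1 : ((m * n + 4 : ℚ)) / (2 * m + 2 * n) ≤ (r:ℚ) := by
    rw [hr]; exact Int.le_ceil _
  have h2 : (r:ℚ) < ((m * n + 4 : ℚ)) / (2 * m + 2 * n) + 1 := by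
    rw [hr]; exact Int.ceil_lt_add_one _
  have H1 : ((m:ℤ) * n + 4) ≤ r * (2 * m + 2 * n) := by
    have := (div_le_iff₀ hb).mp h1
    exact_mod_cast this
  have H2 : (r - 1) * (2 * (m:ℤ) + 2 * n) < (m:ℤ) * n + 4 := by
    have h2' : ((r:ℚ) - 1) < ((m * n + 4 : ℚ)) / (2 * m + 2 * n) := by linarith
    have := (lt_div_iff₀ hb).mp h2'
    exact_mod_cast this
  -- ceiling bounds for 2r = ⌈n/2⌉
  have hc : ⌈(n : ℚ) / 2⌉ = 2 * r := by omega
  have h3 : (n:ℚ) / 2 ≤ ((2 * r : ℤ) : ℚ) := by rw [← hc]; exact Int.le_ceil _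
  have h4 : ((2 * r : ℤ) : ℚ) < (n:ℚ) / 2 + 1 := by rw [← hc]; exact Int.ceil_lt_add_one _
  have H3 : (n:ℤ) ≤ 4 * r := by
    have := (div_le_iff₀ (by norm_num : (0:ℚ) < 2)).mp h3
    push_cast at this
    have h' : (n:ℤ) ≤ 2 * r * 2 := Int.cast_le.mp (show ((n:ℤ):ℚ) ≤ ((2 * r * 2 : ℤ):ℚ) by push_cast; linarith)
    linarith
  have H4 : 4 * r < (n:ℤ) + 2 := by
    have h4' : ((2 * r : ℤ) : ℚ) - 1 < (n:ℚ) / 2 := by linarith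
    have := (lt_div_iff₀ (by norm_num : (0:ℚ) < 2)).mp h4'
    push_cast at this
    have h' : (2 * r - 1) * 2 < (n:ℤ) := Int.cast_lt.mp (show (((2 * r - 1) * 2 : ℤ):ℚ) < ((n:ℤ):ℚ) by push_cast; linarith)
    linarith
  have hnZ : (4:ℤ) ≤ n := by exact_mod_cast hn
  have hmnZ : (n:ℤ) ≤ m := by exact_mod_cast hmn
  -- rule out 4r = n
  have hne : 4 * r ≠ (n:ℤ) := by
    intro h
    have e1 : 4 * r * (m:ℤ) = n * m := by rw [h]
    have e2 : 4 * r * (n:ℤ) = n * n := by rw [h]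
    have e3 : (n:ℤ) * n ≤ n * m := by
      exact mul_le_mul_of_nonneg_left hmnZ (by linarith)
    nlinarith [H1, e1, e2, e3]
  have hr4 : 4 * r = (n:ℤ) + 1 := by omega
  -- rule out m ≥ n + 2
  have hmle : (m:ℤ) ≤ n + 1 := by
    by_contra h
    push_neg at h
    have h' : (n:ℤ) + 2 ≤ m := by omega
    have e1 : 4 * r * (m:ℤ) = (n + 1) * m := by rw [hr4]
    have e2 : 4 * r * (n:ℤ) = (n + 1) * n := by rw [hr4]
    nlinarith [H1, e1, e2]
  constructor
  · omega
  · omega
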